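/- If A is a nonnegative m×n matrix with at most k nonzeros per row and every entry of A is at most 1/W with W ≥ 1 and b = 1 (all-ones), then every row constraint a_i·x ≥ 1 is (1 + k/W)-roundable: a_i·x ≥ 1 implies a_i·⌊(1+k/W)x⌋ ≥ 1 for all nonnegative real x. -/
import Mathlib


open Classical in
theorem stmt_18 (m n k : ℕ) (W : ℝ) (hW : 1 ≤ W)
    (A : Fin m → Fin n → ℝ) (hA0 : ∀ i j, 0 ≤ A i j)
    (hAW : ∀ i j, A i j ≤ 1 / W)
    (hrow : ∀ i, (Finset.univ.filter (fun j => A i j ≠ 0)).card ≤ k) :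
    ∀ i, ∀ x : Fin n → ℝ, (∀ j, 0 ≤ x j) → 1 ≤ ∑ j, A i j * x j →
      1 ≤ ∑ j, A i j * (⌊(1 + (k : ℝ) / W) * x j⌋ : ℝ) := by
  intro i x hx hsum
  have hW0 : (0:ℝ) < W := lt_of_lt_of_le one_pos hW
  set c : ℝ := 1 + (k:ℝ)/W with hc
  have hkW : 0 ≤ (k:ℝ)/W := by positivity
  -- row sum bound
  have hrowsum : ∑ j, A i j ≤ (k:ℝ)/W := by
    have h1 : ∑ j ∈ Finset.univ.filter (fun j => A i j ≠ 0), A i j = ∑ j, A i j :=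
      Finset.sum_filter_ne_zero _
    rw [← h1]
    calc ∑ j ∈ Finset.univ.filter (fun j => A i j ≠ 0), A i j
        ≤ (Finset.univ.filter (fun j => A i j ≠ 0)).card • (1/W) :=
          Finset.sum_le_card_nsmul _ _ _ (fun j _ => hAW i j)
      _ = ((Finset.univ.filter (fun j => A i j ≠ 0)).card : ℝ) * (1/W) := by
          rw [nsmul_eq_mul]
      _ ≤ (k:ℝ) * (1/W) := by
          have : ((Finset.univ.filter (fun j => A i j ≠ 0)).card : ℝ) ≤ (k:ℝ) := by
            exact_mod_cast hrow i
          have h1W : 0 ≤ 1/W := by positivity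
          exact mul_le_mul_of_nonneg_right this h1W
      _ = (k:ℝ)/W := by ring
  have key : ∀ j ∈ Finset.univ, A i j * (c * x j - 1) ≤ A i j * (⌊c * x j⌋ : ℝ) := by
    intro j _
    have hfl : c * x j - 1 ≤ (⌊c * x j⌋ : ℝ) := le_of_lt (Int.sub_one_lt_floor _)
    exact mul_le_mul_of_nonneg_left hfl (hA0 i j)
  have hsum2 : ∑ j, A i j * (c * x j - 1) ≤ ∑ j, A i j * (⌊c * x j⌋ : ℝ) :=
    Finset.sum_le_sum key
  have hexp : ∑ j, A i j * (c * x j - 1) = c * (∑ j, A i j * x j) - ∑ j, A i j := by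
    rw [Finset.mul_sum, ← Finset.sum_sub_distrib]
    exact Finset.sum_congr rfl (fun j _ => by ring)
  have hcS : c * 1 ≤ c * (∑ j, A i j * x j) :=
    mul_le_mul_of_nonneg_left hsum (by positivity)
  have : 1 ≤ ∑ j, A i j * (c * x j - 1) := by
    rw [hexp]; simp only [hc] at hcS ⊢; linarith
  linarith
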